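/- Let B ∈ ℝⁿˣⁿ be symmetric positive definite, A ∈ ℝ^{m×n}, S ∈ ℝ^{m×k} with Aᵀ S of full column rank k, and r ∈ ℝ^m. Then among all p satisfying Sᵀ A p = Sᵀ r, the vector p* = B⁻¹ Aᵀ S (Sᵀ A B⁻¹ Aᵀ S)⁻¹ Sᵀ r achieves the strictly smallest B-norm ‖p‖_B = (pᵀ B p)^{1/2}: for any other feasible p ≠ p*, ‖p*‖_B < ‖p‖_B. -/

import Mathlib

open Matrix

/-- Minimum-B-norm characterization: among all `p` with `SᵀAp = Sᵀr`, the update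
`p*` has strictly smallest `B`-norm. -/
theorem min_B_norm (m n k : ℕ) (B : Matrix (Fin n) (Fin n) ℝ) (hB : B.PosDef)
    (A : Matrix (Fin m) (Fin n) ℝ)
    (S : Matrix (Fin m) (Fin k) ℝ) (hrank : (Aᵀ * S).rank = k)
    (r : Fin m → ℝ) (pstar : Fin n → ℝ)
    (hpstar : pstar = (B⁻¹ * Aᵀ * S * (Sᵀ * A * B⁻¹ * Aᵀ * S)⁻¹ * Sᵀ).mulVec r) :
    (Sᵀ * A).mulVec pstar = Sᵀ.mulVec r ∧
    ∀ p : Fin n → ℝ, (Sᵀ * A).mulVec p = Sᵀ.mulVec r → p ≠ pstar →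
      Real.sqrt (pstar ⬝ᵥ B.mulVec pstar) < Real.sqrt (p ⬝ᵥ B.mulVec p) := by
  set N := Aᵀ * S with hN
  -- injectivity of N.mulVec
  have hinj : Function.Injective N.mulVec := by
    have h1 := N.mulVecLin.finrank_range_add_finrank_ker
    rw [Matrix.rank] at hrank
    rw [hrank] at h1
    simp [Module.finrank_pi] at h1
    exact LinearMap.ker_eq_bot.mp h1
  have hBinv : (B⁻¹).PosDef := hB.inv
  set M := Sᵀ * A * B⁻¹ * Aᵀ * S with hM
  have hMN : M = Nᵀ * (B⁻¹ * N) := by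
    simp only [hM, hN, transpose_mul, transpose_transpose, Matrix.mul_assoc]
  have hMpd : M.PosDef := by
    refine Matrix.PosDef.of_dotProduct_mulVec_pos ?_ ?_
    · rw [hMN]
      have : (Nᵀ * (B⁻¹ * N)).IsHermitian := by
        have hBh : (B⁻¹).IsHermitian := hBinv.1
        simpa [Matrix.mul_assoc] using isHermitian_conjTranspose_mul_mul N hBh
      exact this
    · intro x hx
      have hNx : N.mulVec x ≠ 0 := fun h => hx (hinj (h.trans (by simp [mulVec_zero])))
      have := hBinv.dotProduct_mulVec_pos hNx
      simpa [hMN, star_trivial, ← Matrix.mulVec_mulVec, dotProduct_mulVec,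
        vecMul_transpose] using this
  have hMunit : IsUnit M.det := hMpd.det_pos.ne'.isUnit
  have hMMinv : M * M⁻¹ = 1 := Matrix.mul_nonsing_inv _ hMunit
  have hBunit : IsUnit B.det := hB.det_pos.ne'.isUnit
  have hBBinv : B * B⁻¹ = 1 := Matrix.mul_nonsing_inv _ hBunit
  -- rewrite pstar
  set w : Fin k → ℝ := (M⁻¹).mulVec (Sᵀ.mulVec r) with hw
  have hp2 : pstar = (B⁻¹).mulVec (N.mulVec w) := by
    rw [hpstar, hw]
    simp [Matrix.mulVec_mulVec, Matrix.mul_assoc, hN]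
  have hfeas : (Sᵀ * A).mulVec pstar = Sᵀ.mulVec r := by
    have : (Sᵀ * A).mulVec pstar = M.mulVec w := by
      rw [hp2]
      simp [Matrix.mulVec_mulVec, hMN, hN, transpose_mul, Matrix.mul_assoc]
    rw [this, hw, Matrix.mulVec_mulVec, hMMinv, one_mulVec]
  refine ⟨hfeas, ?_⟩
  intro p hfp hne
  set d : Fin n → ℝ := p - pstar with hd
  have hdne : d ≠ 0 := sub_ne_zero.mpr hne
  have hSAd : (Sᵀ * A).mulVec d = 0 := by
    rw [hd, Matrix.mulVec_sub, hfp, hfeas, sub_self]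
  -- B.mulVec pstar = N.mulVec w
  have hBp : B.mulVec pstar = N.mulVec w := by
    rw [hp2, Matrix.mulVec_mulVec, Matrix.mulVec_mulVec, ← Matrix.mul_assoc, hBBinv,
      Matrix.one_mul]
  -- orthogonality
  have horth : d ⬝ᵥ B.mulVec pstar = 0 := by
    rw [hBp]
    have : d ⬝ᵥ N.mulVec w = (Nᵀ.mulVec d) ⬝ᵥ w := by
      rw [dotProduct_mulVec, ← mulVec_transpose]
    rw [this]
    have : Nᵀ.mulVec d = 0 := by
      have : Nᵀ = Sᵀ * A := by simp [hN, transpose_mul]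
      rw [this, hSAd]
    rw [this, zero_dotProduct]
  have hsym : Bᵀ = B := by
    have h := hB.1
    rw [IsHermitian] at h
    simpa using h
  have horth' : pstar ⬝ᵥ B.mulVec d = 0 := by
    calc pstar ⬝ᵥ B.mulVec d = (B.vecMul pstar) ⬝ᵥ d := by rw [dotProduct_mulVec]
      _ = (Bᵀ.mulVec pstar) ⬝ᵥ d := by rw [mulVec_transpose]
      _ = (B.mulVec pstar) ⬝ᵥ d := by rw [hsym]
      _ = d ⬝ᵥ (B.mulVec pstar) := dotProduct_comm _ _
      _ = 0 := horth
  have hdBd : 0 < d ⬝ᵥ B.mulVec d := by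
    have := hB.dotProduct_mulVec_pos hdne
    simpa using this
  have hexp : p ⬝ᵥ B.mulVec p = pstar ⬝ᵥ B.mulVec pstar + d ⬝ᵥ B.mulVec d := by
    have hpd : p = pstar + d := by simp [hd]
    rw [hpd]
    simp [Matrix.mulVec_add, dotProduct_add, add_dotProduct, horth, horth']
  have hlt : pstar ⬝ᵥ B.mulVec pstar < p ⬝ᵥ B.mulVec p := by
    rw [hexp]; linarith
  have hnn : 0 ≤ pstar ⬝ᵥ B.mulVec pstar := by
    have := hB.posSemidef.dotProduct_mulVec_nonneg pstar
    simpa using this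
  exact Real.sqrt_lt_sqrt hnn hlt
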